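/- Let P be a polygon (compact region bounded by a simple closed polygonal curve) with vertex set V(P), and let f : ∂P → R^d be a boundary mapping that maps each edge of P affinely onto a congruent line segment (i.e., f restricted to each edge is an isometry onto a segment). If V(P) is nonexpansive under f, then the whole boundary ∂P is nonexpansive under f: for all a, b ∈ ∂P, ‖f(a)−f(b)‖ ≤ ‖a−b‖. -/

import Mathlib

/-- Quadratic identity: the squared norm along a segment. -/
lemma seg_norm_sq {E : Type*} [NormedAddCommGroup E] [InnerProductSpace ℝ E]
    (X u : E) (s : ℝ) :
    ‖X + s • u‖ ^ 2 = (1 - s) * ‖X‖ ^ 2 + s * ‖X + u‖ ^ 2 + (s ^ 2 - s) * ‖u‖ ^ 2 := by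
  have h1 : ‖X + s • u‖ ^ 2 = ‖X‖ ^ 2 + 2 * inner ℝ X (s • u) + ‖s • u‖ ^ 2 :=
    norm_add_sq_real X (s • u)
  have h2 : ‖X + u‖ ^ 2 = ‖X‖ ^ 2 + 2 * inner ℝ X u + ‖u‖ ^ 2 := norm_add_sq_real X u
  have h3 : (inner ℝ X (s • u) : ℝ) = s * inner ℝ X u := real_inner_smul_right X u s
  have h4 : ‖s • u‖ ^ 2 = s ^ 2 * ‖u‖ ^ 2 := by
    rw [norm_smul, mul_pow, Real.norm_eq_abs, sq_abs]
  rw [h1, h3, h4, h2]; ring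

/-- One-segment nonexpansiveness: if a map is affine-isometric on a segment and
nonexpansive at the endpoints relative to a point, it is nonexpansive along it. -/
lemma seg_lemma {E F : Type*} [NormedAddCommGroup E] [InnerProductSpace ℝ E]
    [NormedAddCommGroup F] [InnerProductSpace ℝ F]
    (A B p : E) (A' B' p' : F)
    (hAB : ‖B' - A'‖ = ‖B - A‖)
    (hA : ‖A' - p'‖ ≤ ‖A - p‖) (hB : ‖B' - p'‖ ≤ ‖B - p‖)
    {s : ℝ} (hs0 : 0 ≤ s) (hs1 : s ≤ 1) :
    ‖A' + s • (B' - A') - p'‖ ≤ ‖A + s • (B - A) - p‖ := by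
  have e1 : A' + s • (B' - A') - p' = (A' - p') + s • (B' - A') := by abel
  have e2 : A + s • (B - A) - p = (A - p) + s • (B - A) := by abel
  rw [e1, e2]
  have key : ‖(A' - p') + s • (B' - A')‖ ^ 2 ≤ ‖(A - p) + s • (B - A)‖ ^ 2 := by
    rw [seg_norm_sq, seg_norm_sq]
    have eA' : (A' - p') + (B' - A') = B' - p' := by abel
    have eA : (A - p) + (B - A) = B - p := by abel
    rw [eA', eA, hAB]
    have h1 : (1 - s) * ‖A' - p'‖ ^ 2 ≤ (1 - s) * ‖A - p‖ ^ 2 := by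
      apply mul_le_mul_of_nonneg_left _ (by linarith)
      exact pow_le_pow_left₀ (norm_nonneg _) hA 2
    have h2 : s * ‖B' - p'‖ ^ 2 ≤ s * ‖B - p‖ ^ 2 := by
      apply mul_le_mul_of_nonneg_left _ hs0
      exact pow_le_pow_left₀ (norm_nonneg _) hB 2
    linarith
  nlinarith [norm_nonneg ((A' - p') + s • (B' - A')), norm_nonneg ((A - p) + s • (B - A))]

/-- Lemma valid, sufficiency: if the vertices of a closed polygonal
boundary are nonexpansive under f and f maps each edge affinely-isometrically onto a
congruent segment, then the whole boundary is nonexpansive under f. -/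
theorem boundary_nonexpansive_of_vertices {d n : ℕ} (hn : 3 ≤ n)
    (V : ZMod n → EuclideanSpace ℝ (Fin 2)) (hinj : Function.Injective V)
    (f : EuclideanSpace ℝ (Fin 2) → EuclideanSpace ℝ (Fin d))
    -- each edge maps affinely
    (haff : ∀ i : ZMod n, ∀ t ∈ Set.Icc (0 : ℝ) 1,
        f (V i + t • (V (i + 1) - V i)) = f (V i) + t • (f (V (i + 1)) - f (V i)))
    -- each edge maps onto a congruent segment (isometrically)
    (hcongr : ∀ i : ZMod n, dist (f (V i)) (f (V (i + 1))) = dist (V i) (V (i + 1)))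
    -- the vertex set is nonexpansive under f
    (hvert : ∀ i j : ZMod n, dist (f (V i)) (f (V j)) ≤ dist (V i) (V j)) :
    ∀ a ∈ ⋃ i : ZMod n, segment ℝ (V i) (V (i + 1)),
      ∀ b ∈ ⋃ i : ZMod n, segment ℝ (V i) (V (i + 1)),
        dist (f a) (f b) ≤ dist a b := by
  -- norm versions of hypotheses
  have hcongr' : ∀ i : ZMod n, ‖f (V (i+1)) - f (V i)‖ = ‖V (i+1) - V i‖ := by
    intro i
    have := hcongr i
    rw [dist_eq_norm, dist_eq_norm] at this
    rw [← norm_neg, ← norm_neg (V (i+1) - V i)]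
    simpa [neg_sub] using this
  have hvert' : ∀ i j : ZMod n, ‖f (V i) - f (V j)‖ ≤ ‖V i - V j‖ := by
    intro i j; have := hvert i j; rwa [dist_eq_norm, dist_eq_norm] at this
  -- step 1: a point on an edge vs any vertex
  have step1 : ∀ i : ZMod n, ∀ s ∈ Set.Icc (0:ℝ) 1, ∀ j : ZMod n,
      ‖f (V i + s • (V (i+1) - V i)) - f (V j)‖ ≤ ‖(V i + s • (V (i+1) - V i)) - V j‖ := by
    intro i s hs j
    rw [haff i s hs]
    exact seg_lemma (V i) (V (i+1)) (V j) (f (V i)) (f (V (i+1))) (f (V j))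
      (hcongr' i) (hvert' i j) (hvert' (i+1) j) hs.1 hs.2
  intro a ha b hb
  rw [Set.mem_iUnion] at ha hb
  obtain ⟨i, hai⟩ := ha
  obtain ⟨j, hbj⟩ := hb
  rw [segment_eq_image'] at hai hbj
  obtain ⟨s, hs, rfl⟩ := hai
  obtain ⟨t, ht, rfl⟩ := hbj
  rw [dist_eq_norm, dist_eq_norm]
  -- step 2: point on edge i vs point on edge j
  set a := V i + s • (V (i+1) - V i) with ha_def
  have key := seg_lemma (V j) (V (j+1)) a (f (V j)) (f (V (j+1))) (f a)
    (hcongr' j)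
    (by rw [norm_sub_rev, norm_sub_rev (V j)]; exact step1 i s hs j)
    (by rw [norm_sub_rev, norm_sub_rev (V (j+1))]; exact step1 i s hs (j+1))
    ht.1 ht.2
  rw [haff j t ht]
  rw [norm_sub_rev, norm_sub_rev a]
  exact key
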